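/- Let c > 0 and t₀ ∈ ℝ. Let y : ℝ → ℝ be twice differentiable on [t₀, ∞) satisfying y''(t) ≥ c² · y(t) > 0 for all t ≥ t₀, and y'(t₀) > 0. Then for every t ≥ t₀ one has y'(t) ≥ √(c²(y(t)² − y(t₀)²) + y'(t₀)²). In particular y'(t) ≥ y'(t₀) > 0 for all t ≥ t₀. -/

import Mathlib

open Set Real

/-- Energy (first-integral) inequality from the proof of Lemma 3.5:
if `y'' ≥ c² y > 0` on `[t₀, ∞)` and `y'(t₀) > 0`, then
`y'(t) ≥ √(c²(y(t)² − y(t₀)²) + y'(t₀)²)`, and in particular `y'(t) ≥ y'(t₀) > 0`. -/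
theorem stmt3 (c t₀ : ℝ) (hc : 0 < c)
    (y y' y'' : ℝ → ℝ)
    (hy1 : ∀ t ∈ Ici t₀, HasDerivWithinAt y (y' t) (Ici t₀) t)
    (hy2 : ∀ t ∈ Ici t₀, HasDerivWithinAt y' (y'' t) (Ici t₀) t)
    (hineq : ∀ t ∈ Ici t₀, c ^ 2 * y t ≤ y'' t)
    (hypos : ∀ t ∈ Ici t₀, 0 < y t)
    (hinit' : 0 < y' t₀) :
    ∀ t ∈ Ici t₀,
      Real.sqrt (c ^ 2 * ((y t) ^ 2 - (y t₀) ^ 2) + (y' t₀) ^ 2) ≤ y' t ∧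
        y' t₀ ≤ y' t := by
  have hsub : Ioi t₀ ⊆ Ici t₀ := Ioi_subset_Ici le_rfl
  have hint : interior (Ici t₀) = Ioi t₀ := interior_Ici
  -- y' is monotone on Ici t₀
  have hmono : MonotoneOn y' (Ici t₀) := by
    apply monotoneOn_of_hasDerivWithinAt_nonneg (convex_Ici t₀)
      (fun t ht => (hy2 t ht).continuousWithinAt) (f' := y'')
    · intro x hx
      rw [hint] at hx ⊢
      exact (hy2 x (hsub hx)).mono hsub
    · intro x hx
      rw [hint] at hx
      have := hineq x (hsub hx)
      nlinarith [hypos x (hsub hx), sq_nonneg c]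
  intro t ht
  have h2 : y' t₀ ≤ y' t := hmono self_mem_Ici ht ht
  refine ⟨?_, h2⟩
  -- energy function
  set E : ℝ → ℝ := fun s => y' s ^ 2 - c ^ 2 * y s ^ 2 with hE
  have hE' : ∀ s ∈ Ici t₀, HasDerivWithinAt E
      (2 * y' s * y'' s - c ^ 2 * (2 * y s * y' s)) (Ici t₀) s := by
    intro s hs
    have h1 : HasDerivWithinAt (fun u => y' u ^ 2) (2 * y' s * y'' s) (Ici t₀) s := by
      simpa [mul_comm, mul_assoc] using ((hy2 s hs).fun_pow 2)
    have h2 : HasDerivWithinAt (fun u => c ^ 2 * y u ^ 2) (c ^ 2 * (2 * y s * y' s)) (Ici t₀) s := by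
      have := ((hy1 s hs).pow 2).const_mul (c ^ 2)
      simpa [mul_comm, mul_assoc] using this
    exact h1.sub h2
  have hEmono : MonotoneOn E (Ici t₀) := by
    apply monotoneOn_of_hasDerivWithinAt_nonneg (convex_Ici t₀)
      (fun s hs => (hE' s hs).continuousWithinAt)
      (f' := fun s => 2 * y' s * y'' s - c ^ 2 * (2 * y s * y' s))
    · intro x hx
      rw [hint] at hx ⊢
      exact (hE' x (hsub hx)).mono hsub
    · intro x hx
      rw [hint] at hx
      have hx' := hsub hx
      have h1 := hineq x hx'
      have h2 : (0:ℝ) < y' x := lt_of_lt_of_le hinit' (hmono self_mem_Ici hx' hx'.out)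
      nlinarith
  have hEle : E t₀ ≤ E t := hEmono self_mem_Ici ht ht
  have hyt : 0 ≤ y' t := le_of_lt (lt_of_lt_of_le hinit' h2)
  have key : c ^ 2 * ((y t) ^ 2 - (y t₀) ^ 2) + (y' t₀) ^ 2 ≤ (y' t) ^ 2 := by
    simp only [hE] at hEle; nlinarith
  calc Real.sqrt (c ^ 2 * ((y t) ^ 2 - (y t₀) ^ 2) + (y' t₀) ^ 2)
      ≤ Real.sqrt ((y' t) ^ 2) := Real.sqrt_le_sqrt key
    _ = y' t := by rw [Real.sqrt_sq hyt]
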